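/- The difference in efficiency bounds Var(D*) − Var(D_os) = odds(R=0)·E[Var(D|A,Y) | A=1]·P(A=1) equals zero if and only if P(A=1) = 0 or Var(D | A,Y) = 0 almost surely on {A=1} (i.e., D is a.s. a function of (A,Y) on the treated). -/

import Mathlib

open MeasureTheory ProbabilityTheory
open scoped ENNReal

/-- The σ-algebra generated by the pair `(A, Y)`. -/
def sigmaAY {Ω : Type*} (A Y : Ω → ℝ) : MeasurableSpace Ω :=
  MeasurableSpace.comap (fun ω => (A ω, Y ω)) inferInstance

/-- The conditional variance `Var(D | A,Y) = E[D² | A,Y] − E[D | A,Y]²`. -/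
noncomputable def condVarAY {Ω : Type*} [MeasurableSpace Ω] (μ : MeasureTheory.Measure Ω)
    (A Y D : Ω → ℝ) : Ω → ℝ :=
  fun ω => (μ[fun ω' => D ω' ^ 2 | sigmaAY A Y]) ω - ((μ[D | sigmaAY A Y]) ω) ^ 2

/-- Conditional expectation of `f` given the event `s`: `E(f | s)`. -/
noncomputable def cexp {Ω : Type*} [MeasurableSpace Ω] (μ : MeasureTheory.Measure Ω)
    (f : Ω → ℝ) (s : Set Ω) : ℝ :=
  (∫ ω in s, f ω ∂μ) / (μ s).toReal

lemma indepFun_of_comap' {Ω α β γ : Type*} {mΩ : MeasurableSpace Ω} {mα : MeasurableSpace α}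
    {mβ : MeasurableSpace β} {mγ : MeasurableSpace γ} {μ : Measure Ω}
    {f : Ω → α} {g : Ω → β} {g' : Ω → γ}
    (h : IndepFun f g μ) (hg' : Measurable[mβ.comap g] g') : IndepFun f g' μ := by
  rw [indepFun_iff_measure_inter_preimage_eq_mul] at h ⊢
  intro s t hs ht
  obtain ⟨t', ht', heq⟩ := hg' ht
  rw [← heq]
  exact h s t' hs ht'

lemma memLp_two_condexp' {Ω : Type*} {m : MeasurableSpace Ω} [mΩ : MeasurableSpace Ω]
    (μ : Measure Ω) [IsProbabilityMeasure μ] (hle : m ≤ mΩ) {D : Ω → ℝ}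
    (hD2 : MemLp D 2 μ) : MemLp (μ[D|m]) 2 μ := by
  haveI : SigmaFinite (μ.trim hle) := by infer_instance
  set g : Lp ℝ 2 μ := (condExpL2 ℝ ℝ hle (hD2.toLp D) : Lp ℝ 2 μ) with hg
  have hgLp : MemLp (g : Ω → ℝ) 2 μ := Lp.memLp g
  have hgm : (g : Ω → ℝ) =ᵐ[μ] μ[D|m] := by
    refine ae_eq_condExp_of_forall_setIntegral_eq hle (hD2.integrable one_le_two)
      (fun s _ hμs => (hgLp.integrable one_le_two).integrableOn)
      (fun s hs hμs => ?_) ?_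
    · rw [integral_condExpL2_eq hle (hD2.toLp D) hs hμs.ne]
      exact setIntegral_congr_ae (hle s hs)
        ((hD2.coeFn_toLp).mono fun x hx _ => hx)
    · exact aestronglyMeasurable_condExpL2 hle _
  exact hgLp.ae_eq hgm

/-- The difference in efficiency bounds
`Var(D*) − Var(D_os) = odds(R=0)·E[Var(D|A,Y) | A=1]·P(A=1)` is zero if and only if
`P(A=1) = 0` or `Var(D | A,Y) = 0` almost surely on `{A=1}`. -/
theorem stmt18 {Ω : Type*} [MeasurableSpace Ω] (μ : Measure Ω) [IsProbabilityMeasure μ]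
    (Z A R Y D : Ω → ℝ)
    (hZm : Measurable Z) (hAm : Measurable A) (hRm : Measurable R) (hYm : Measurable Y)
    (hZbin : ∀ ω, Z ω = 0 ∨ Z ω = 1)
    (hAbin : ∀ ω, A ω = 0 ∨ A ω = 1)
    (hRbin : ∀ ω, R ω = 0 ∨ R ω = 1)
    -- D is a measurable function of (Z, A, Y)
    (hDm : Measurable[MeasurableSpace.comap (fun ω => (Z ω, A ω, Y ω)) inferInstance] D)
    (hD2 : MemLp D 2 μ) (hDmean : ∫ ω, D ω ∂μ = 0)
    -- MCAR: R independent of (Z, A, Y)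
    (hindep : IndepFun R (fun ω => (Z ω, A ω, Y ω)) μ)
    (p : ℝ) (hp : p = (μ {ω | R ω = 1}).toReal) (hppos : 0 < p) (hplt : p < 1)
    (Rdag : Ω → ℝ) (hRdag : Rdag = fun ω => R ω * (1 - A ω) + A ω)
    (Dstar : Ω → ℝ)
    (hDstar : Dstar = fun ω =>
      (R ω / p) * (D ω - (μ[D | sigmaAY A Y]) ω) + (μ[D | sigmaAY A Y]) ω)
    (Dos : Ω → ℝ)
    (hDos : Dos = fun ω =>
      (Rdag ω / (A ω + (1 - A ω) * p)) * (D ω - (μ[D | sigmaAY A Y]) ω) +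
        (μ[D | sigmaAY A Y]) ω) :
    variance Dstar μ - variance Dos μ =
      ((1 - p) / p) * cexp μ (condVarAY μ A Y D) {ω | A ω = 1} * (μ {ω | A ω = 1}).toReal ∧
    (variance Dstar μ = variance Dos μ ↔
      μ {ω | A ω = 1} = 0 ∨ ∀ᵐ ω ∂μ, A ω = 1 → condVarAY μ A Y D ω = 0) := by
  classical
  set m : Ω → ℝ := μ[D | sigmaAY A Y] with hm_def
  set sA : Set Ω := {ω | A ω = 1} with hsA_def
  have hle : sigmaAY A Y ≤ ‹MeasurableSpace Ω› := (hAm.prodMk hYm).comap_le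
  haveI : SigmaFinite (μ.trim hle) := by infer_instance
  have htriple : Measurable (fun ω => (Z ω, A ω, Y ω)) := hZm.prodMk (hAm.prodMk hYm)
  have htriple_le : MeasurableSpace.comap (fun ω => (Z ω, A ω, Y ω)) inferInstance ≤
      ‹MeasurableSpace Ω› := htriple.comap_le
  have hAYle : sigmaAY A Y ≤
      MeasurableSpace.comap (fun ω => (Z ω, A ω, Y ω)) inferInstance := by
    have h1 : (fun ω => (A ω, Y ω)) =
        (fun q : ℝ × ℝ × ℝ => q.2) ∘ (fun ω => (Z ω, A ω, Y ω)) := rfl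
    rw [sigmaAY, h1, ← MeasurableSpace.comap_comp]
    exact MeasurableSpace.comap_mono measurable_snd.comap_le
  have hDmeas : Measurable D := hDm.mono htriple_le le_rfl
  have hm_sm : StronglyMeasurable[sigmaAY A Y] m := stronglyMeasurable_condExp
  have hm_meas : Measurable m := (hm_sm.mono hle).measurable
  have hm_tm : Measurable[MeasurableSpace.comap (fun ω => (Z ω, A ω, Y ω)) inferInstance] m :=
    hm_sm.measurable.mono hAYle le_rfl
  have he_tm : Measurable[MeasurableSpace.comap (fun ω => (Z ω, A ω, Y ω)) inferInstance]
      (fun ω => D ω - m ω) := hDm.sub hm_tm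
  have hsA_AY : MeasurableSet[sigmaAY A Y] sA :=
    ⟨Prod.fst ⁻¹' {1}, measurable_fst (measurableSet_singleton 1), rfl⟩
  have hsA : MeasurableSet sA := hle _ hsA_AY
  have hsA_t : MeasurableSet[MeasurableSpace.comap (fun ω => (Z ω, A ω, Y ω)) inferInstance] sA :=
    hAYle _ hsA_AY
  -- integrability facts
  have hm2 : MemLp m 2 μ := memLp_two_condexp' μ hle hD2
  have he2 : MemLp (fun ω => D ω - m ω) 2 μ := hD2.sub hm2
  have hD_int : Integrable D μ := hD2.integrable one_le_two
  have hm_int : Integrable m μ := integrable_condExp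
  have he2sq : Integrable (fun ω => (D ω - m ω) ^ 2) μ := he2.integrable_sq
  have hD_sq : Integrable (fun ω => D ω ^ 2) μ := hD2.integrable_sq
  have hm_sq : Integrable (fun ω => m ω ^ 2) μ := hm2.integrable_sq
  have hmD : Integrable (fun ω => m ω * D ω) μ := by
    have h := (((hm2.add hD2).integrable_sq).sub hm_sq).sub hD_sq
    have heq : (fun ω => m ω * D ω) =
        fun ω => (((m ω + D ω) ^ 2 - m ω ^ 2) - D ω ^ 2) / 2 := by
      funext ω; ring
    rw [heq]; exact h.div_const 2
  have heM : Integrable (fun ω => (D ω - m ω) * m ω) μ := by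
    have heq : (fun ω => (D ω - m ω) * m ω) = fun ω => m ω * D ω - m ω ^ 2 := by
      funext ω; ring
    rw [heq]; exact hmD.sub hm_sq
  -- conditional variance identification
  have hcv : μ[(fun ω => (D ω - m ω) ^ 2) | sigmaAY A Y] =ᵐ[μ] condVarAY μ A Y D := by
    have hsub1 : Integrable (fun ω => 2 * (m ω * D ω) - m ω ^ 2) μ := (hmD.const_mul 2).sub hm_sq
    have h1 : μ[(fun ω => (D ω - m ω) ^ 2) | sigmaAY A Y] =ᵐ[μ]
        μ[(fun ω' => D ω' ^ 2) | sigmaAY A Y] -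
          μ[(fun ω => 2 * (m ω * D ω) - m ω ^ 2) | sigmaAY A Y] := by
      have heq : (fun ω => (D ω - m ω) ^ 2) =
          (fun ω' => D ω' ^ 2) - (fun ω => 2 * (m ω * D ω) - m ω ^ 2) := by
        funext ω; simp only [Pi.sub_apply]; ring
      rw [heq]
      exact condExp_sub hD_sq hsub1 (sigmaAY A Y)
    have h2 : μ[(fun ω => 2 * (m ω * D ω) - m ω ^ 2) | sigmaAY A Y] =ᵐ[μ]
        μ[(fun ω => 2 * (m ω * D ω)) | sigmaAY A Y] - μ[(fun ω => m ω ^ 2) | sigmaAY A Y] :=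
      condExp_sub (hmD.const_mul 2) hm_sq (sigmaAY A Y)
    have h3 : μ[(fun ω => 2 * (m ω * D ω)) | sigmaAY A Y] =ᵐ[μ]
        (2 : ℝ) • μ[(fun ω => m ω * D ω) | sigmaAY A Y] :=
      condExp_smul (2 : ℝ) (fun ω => m ω * D ω) (sigmaAY A Y)
    have h4 : μ[(fun ω => m ω * D ω) | sigmaAY A Y] =ᵐ[μ] m * μ[D | sigmaAY A Y] :=
      condExp_mul_of_stronglyMeasurable_left hm_sm hmD hD_int
    have h5 : μ[(fun ω => m ω ^ 2) | sigmaAY A Y] = fun ω => m ω ^ 2 := by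
      refine condExp_of_stronglyMeasurable hle ?_ hm_sq
      have heq : (fun ω => m ω ^ 2) = fun ω => m ω * m ω := by funext ω; ring
      rw [heq]; exact hm_sm.mul hm_sm
    filter_upwards [h1, h2, h3, h4] with ω e1 e2 e3 e4
    have e5 := congrFun h5 ω
    simp only [Pi.sub_apply] at e1 e2
    simp only [Pi.smul_apply, smul_eq_mul] at e3
    simp only [Pi.mul_apply] at e4
    rw [e1, e2, e3, e4, e5]
    simp only [condVarAY, ← hm_def]
    ring
  have hcv_nonneg : 0 ≤ᵐ[μ] condVarAY μ A Y D := by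
    have h := condExp_nonneg (m := sigmaAY A Y) (μ := μ)
      (f := fun ω => (D ω - m ω) ^ 2) (Filter.Eventually.of_forall fun ω => sq_nonneg _)
    filter_upwards [h, hcv] with ω h1 h2
    rw [← h2]; exact h1
  have hCVint : Integrable (condVarAY μ A Y D) μ := integrable_condExp.sub hm_sq
  -- connecting the set integrals
  have hJ : ∫ ω in sA, (D ω - m ω) ^ 2 ∂μ = ∫ ω in sA, condVarAY μ A Y D ω ∂μ := by
    rw [← setIntegral_condExp hle he2sq hsA_AY]
    exact setIntegral_congr_ae hsA (hcv.mono fun ω h _ => h)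
  have hcexp : cexp μ (condVarAY μ A Y D) sA * (μ sA).toReal =
      ∫ ω in sA, condVarAY μ A Y D ω ∂μ := by
    rcases eq_or_ne ((μ sA).toReal) 0 with h0 | h0
    · have hμ0 : μ sA = 0 := by
        rcases (ENNReal.toReal_eq_zero_iff _).mp h0 with h | h
        · exact h
        · exact absurd h (measure_ne_top μ sA)
      rw [h0, mul_zero, setIntegral_measure_zero _ hμ0]
    · rw [cexp]; field_simp
  -- indicator helper functions
  set g1 : Ω → ℝ := sA.indicator (fun ω => D ω - m ω) with hg1_def
  set g2 : Ω → ℝ := sA.indicator (fun ω => (D ω - m ω) ^ 2) with hg2_def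
  set g3 : Ω → ℝ := sA.indicator (fun ω => 2 * ((D ω - m ω) * m ω)) with hg3_def
  have hg1_tm : Measurable[MeasurableSpace.comap (fun ω => (Z ω, A ω, Y ω)) inferInstance] g1 :=
    he_tm.indicator hsA_t
  have hg2_tm : Measurable[MeasurableSpace.comap (fun ω => (Z ω, A ω, Y ω)) inferInstance] g2 :=
    (he_tm.pow_const 2).indicator hsA_t
  have hg3_tm : Measurable[MeasurableSpace.comap (fun ω => (Z ω, A ω, Y ω)) inferInstance] g3 :=
    ((he_tm.mul hm_tm).const_mul 2).indicator hsA_t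
  have hg1_m : Measurable g1 := hg1_tm.mono htriple_le le_rfl
  have hg2_m : Measurable g2 := hg2_tm.mono htriple_le le_rfl
  have hg3_m : Measurable g3 := hg3_tm.mono htriple_le le_rfl
  have hg1_int : Integrable g1 μ := (he2.integrable one_le_two).indicator hsA
  have hg2_int : Integrable g2 μ := he2sq.indicator hsA
  have hg3_int : Integrable g3 μ := (heM.const_mul 2).indicator hsA
  -- independence facts
  have hind1 : IndepFun (fun ω => R ω / p - 1) g1 μ :=
    (indepFun_of_comap' hindep hg1_tm).comp
      ((measurable_id.div_const p).sub measurable_const) measurable_id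
  have hind2 : IndepFun (fun ω => (R ω / p) ^ 2 - 1) g2 μ :=
    (indepFun_of_comap' hindep hg2_tm).comp
      (((measurable_id.div_const p).pow_const 2).sub measurable_const) measurable_id
  have hind3 : IndepFun (fun ω => R ω / p - 1) g3 μ :=
    (indepFun_of_comap' hindep hg3_tm).comp
      ((measurable_id.div_const p).sub measurable_const) measurable_id
  -- expectation of R
  have hRind : R = Set.indicator {ω | R ω = 1} (fun _ => (1 : ℝ)) := by
    funext ω
    rcases hRbin ω with h | h
    · have hnot : ω ∉ {ω | R ω = 1} := by simp [h]
      simp [Set.indicator_of_notMem hnot, h]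
    · have hmem : ω ∈ {ω | R ω = 1} := h
      simp [Set.indicator_of_mem hmem, h]
  have hRset : MeasurableSet {ω | R ω = 1} := hRm (measurableSet_singleton 1)
  have hRint : Integrable R μ := by
    rw [hRind]; exact (integrable_const (1 : ℝ)).indicator hRset
  have hER : ∫ ω, R ω ∂μ = p := by
    conv_lhs => rw [hRind]
    rw [integral_indicator hRset, setIntegral_const, smul_eq_mul, mul_one, measureReal_def, hp]
  have hEf1 : ∫ ω, (R ω / p - 1) ∂μ = 0 := by
    rw [integral_sub (hRint.div_const p) (integrable_const 1), integral_div, hER,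
      integral_const]
    simp [measure_univ, div_self hppos.ne']
  have hEf2 : ∫ ω, ((R ω / p) ^ 2 - 1) ∂μ = 1 / p - 1 := by
    have hsqeq : (fun ω => (R ω / p) ^ 2) = fun ω => R ω / p ^ 2 := by
      funext ω; rcases hRbin ω with h | h <;> rw [h] <;> ring
    have hint : Integrable (fun ω => (R ω / p) ^ 2) μ := by
      rw [hsqeq]; exact hRint.div_const _
    rw [integral_sub hint (integrable_const 1), hsqeq, integral_div, hER, integral_const]
    simp only [probReal_univ, measure_univ, ENNReal.toReal_one, one_smul]
    congr 1
    field_simp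
  -- pointwise decompositions
  have hptw1 : (fun ω => Dstar ω - Dos ω) = fun ω => (R ω / p - 1) * g1 ω := by
    funext ω
    rcases hAbin ω with h | h
    · have hnot : ω ∉ sA := by simp [hsA_def, h]
      rw [hg1_def]
      simp only [hDstar, hDos, hRdag, h, Set.indicator_of_notMem hnot]
      rw [show R ω * (1 - 0) + 0 = R ω by ring, show (0 : ℝ) + (1 - 0) * p = p by ring]
      ring
    · have hmem : ω ∈ sA := h
      rw [hg1_def]
      simp only [hDstar, hDos, hRdag, h, Set.indicator_of_mem hmem]
      rw [show R ω * (1 - 1) + 1 = 1 by ring, show (1 : ℝ) + (1 - 1) * p = 1 by ring]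
      ring
  have hptw2 : (fun ω => Dstar ω ^ 2 - Dos ω ^ 2) =
      fun ω => ((R ω / p) ^ 2 - 1) * g2 ω + (R ω / p - 1) * g3 ω := by
    funext ω
    rcases hAbin ω with h | h
    · have hnot : ω ∉ sA := by simp [hsA_def, h]
      rw [hg2_def, hg3_def]
      simp only [hDstar, hDos, hRdag, h, Set.indicator_of_notMem hnot]
      rw [show R ω * (1 - 0) + 0 = R ω by ring, show (0 : ℝ) + (1 - 0) * p = p by ring]
      ring
    · have hmem : ω ∈ sA := h
      rw [hg2_def, hg3_def]
      simp only [hDstar, hDos, hRdag, h, Set.indicator_of_mem hmem]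
      rw [show R ω * (1 - 1) + 1 = 1 by ring, show (1 : ℝ) + (1 - 1) * p = 1 by ring]
      field_simp
      ring
  -- square integrability of Dstar and Dos
  have hbound : ∀ x y : ℝ, |x| ≤ 1 → ‖x / p * y‖ ≤ ‖1 / p * y‖ := by
    intro x y hx
    rw [Real.norm_eq_abs, Real.norm_eq_abs, abs_mul, abs_mul, abs_div, abs_div, abs_one,
      abs_of_pos hppos]
    gcongr
  have habsR : ∀ ω, |R ω| ≤ 1 := by
    intro ω; rcases hRbin ω with h | h <;> simp [h]
  have hDstar2 : MemLp Dstar 2 μ := by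
    rw [hDstar]
    refine MemLp.add ?_ hm2
    refine MemLp.of_le (he2.const_mul (1 / p))
      (((hRm.div_const p).mul (hDmeas.sub hm_meas)).aestronglyMeasurable)
      (Filter.Eventually.of_forall fun ω => ?_)
    exact hbound (R ω) (D ω - m ω) (habsR ω)
  have hDos2 : MemLp Dos 2 μ := by
    rw [hDos, hRdag]
    refine MemLp.add ?_ hm2
    refine MemLp.of_le (he2.const_mul (1 / p))
      (((((hRm.mul (measurable_const.sub hAm)).add hAm).div
        (hAm.add ((measurable_const.sub hAm).mul_const p))).mul
          (hDmeas.sub hm_meas)).aestronglyMeasurable)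
      (Filter.Eventually.of_forall fun ω => ?_)
    show ‖(R ω * (1 - A ω) + A ω) / (A ω + (1 - A ω) * p) * (D ω - m ω)‖ ≤
      ‖1 / p * (D ω - m ω)‖
    rcases hAbin ω with h | h
    · rw [h, show R ω * (1 - 0) + 0 = R ω by ring, show (0 : ℝ) + (1 - 0) * p = p by ring]
      exact hbound (R ω) (D ω - m ω) (habsR ω)
    · rw [h, show R ω * (1 - 1) + 1 = 1 by ring, show (1 : ℝ) + (1 - 1) * p = 1 by ring]
      have h1p : (1 : ℝ) ≤ 1 / p := by
        rw [le_div_iff₀ hppos]; linarith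
      rw [div_one, one_mul, Real.norm_eq_abs, Real.norm_eq_abs, abs_mul, abs_div, abs_one,
        abs_of_pos hppos]
      nlinarith [abs_nonneg (D ω - m ω)]
  have hDstar_int : Integrable Dstar μ := hDstar2.integrable one_le_two
  have hDos_int : Integrable Dos μ := hDos2.integrable one_le_two
  -- equal means
  have hmean : ∫ ω, Dstar ω ∂μ = ∫ ω, Dos ω ∂μ := by
    have h0 : ∫ ω, (Dstar ω - Dos ω) ∂μ = 0 := by
      rw [hptw1,
        show (∫ ω, (R ω / p - 1) * g1 ω ∂μ) =
          (∫ ω, (R ω / p - 1) ∂μ) * ∫ ω, g1 ω ∂μ from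
            hind1.integral_mul_eq_mul_integral ((hRm.div_const p).sub measurable_const).aestronglyMeasurable
              hg1_m.aestronglyMeasurable,
        hEf1, zero_mul]
    have h1 := integral_sub hDstar_int hDos_int
    rw [h0] at h1
    linarith
  -- second moments
  have hsq : (∫ ω, Dstar ω ^ 2 ∂μ) - ∫ ω, Dos ω ^ 2 ∂μ =
      (1 / p - 1) * ∫ ω in sA, (D ω - m ω) ^ 2 ∂μ := by
    have hX2 : Integrable (fun ω => Dstar ω ^ 2) μ := hDstar2.integrable_sq
    have hY2 : Integrable (fun ω => Dos ω ^ 2) μ := hDos2.integrable_sq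
    have hf2gint : Integrable (fun ω => ((R ω / p) ^ 2 - 1) * g2 ω) μ := by
      refine hg2_int.bdd_mul
        (((hRm.div_const p).pow_const 2).sub measurable_const).aestronglyMeasurable
        (c := 1 / p ^ 2 + 1) (Filter.Eventually.of_forall fun ω => ?_)
      have h0 : (0 : ℝ) ≤ (R ω / p) ^ 2 := sq_nonneg _
      have h1 : (R ω / p) ^ 2 ≤ 1 / p ^ 2 := by
        rcases hRbin ω with h | h
        · rw [h, zero_div]; norm_num; positivity
        · rw [h, div_pow, one_pow]
      rw [Real.norm_eq_abs, abs_le]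
      constructor <;> linarith [show (0 : ℝ) ≤ 1 / p ^ 2 by positivity]
    have hf1gint : Integrable (fun ω => (R ω / p - 1) * g3 ω) μ := by
      refine hg3_int.bdd_mul
        ((hRm.div_const p).sub measurable_const).aestronglyMeasurable
        (c := 1 / p + 1) (Filter.Eventually.of_forall fun ω => ?_)
      have h0 : (0 : ℝ) ≤ R ω / p := by
        rcases hRbin ω with h | h <;> rw [h] <;> positivity
      have h1 : R ω / p ≤ 1 / p := by
        rcases hRbin ω with h | h
        · rw [h, zero_div]; positivity
        · rw [h]
      rw [Real.norm_eq_abs, abs_le]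
      constructor <;> linarith [show (0 : ℝ) ≤ 1 / p by positivity]
    have h1 : ∫ ω, (Dstar ω ^ 2 - Dos ω ^ 2) ∂μ =
        (∫ ω, ((R ω / p) ^ 2 - 1) * g2 ω ∂μ) + ∫ ω, (R ω / p - 1) * g3 ω ∂μ := by
      rw [hptw2]
      exact integral_add hf2gint hf1gint
    have h2 : ∫ ω, ((R ω / p) ^ 2 - 1) * g2 ω ∂μ =
        (1 / p - 1) * ∫ ω in sA, (D ω - m ω) ^ 2 ∂μ := by
      rw [show (∫ ω, ((R ω / p) ^ 2 - 1) * g2 ω ∂μ) =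
          (∫ ω, ((R ω / p) ^ 2 - 1) ∂μ) * ∫ ω, g2 ω ∂μ from
            hind2.integral_mul_eq_mul_integral
              (((hRm.div_const p).pow_const 2).sub measurable_const).aestronglyMeasurable
              hg2_m.aestronglyMeasurable, hEf2, hg2_def, integral_indicator hsA]
    have h3 : ∫ ω, (R ω / p - 1) * g3 ω ∂μ = 0 := by
      rw [show (∫ ω, (R ω / p - 1) * g3 ω ∂μ) =
          (∫ ω, (R ω / p - 1) ∂μ) * ∫ ω, g3 ω ∂μ from
            hind3.integral_mul_eq_mul_integral ((hRm.div_const p).sub measurable_const).aestronglyMeasurable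
              hg3_m.aestronglyMeasurable, hEf1, zero_mul]
    have h4 := integral_sub hX2 hY2
    rw [h1, h2, h3, add_zero] at h4
    linarith
  -- the main variance computation
  have key : variance Dstar μ - variance Dos μ =
      ((1 - p) / p) * ∫ ω in sA, condVarAY μ A Y D ω ∂μ := by
    rw [variance_eq_sub hDstar2, variance_eq_sub hDos2]
    simp only [Pi.pow_apply]
    rw [show (∫ ω, Dstar ω ∂μ) = ∫ ω, Dos ω ∂μ from hmean]
    rw [show (μ[fun ω => Dstar ω ^ 2] - (∫ ω, Dos ω ∂μ) ^ 2 -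
        (μ[fun ω => Dos ω ^ 2] - (∫ ω, Dos ω ∂μ) ^ 2)) =
        (∫ ω, Dstar ω ^ 2 ∂μ) - ∫ ω, Dos ω ^ 2 ∂μ by ring, hsq, hJ]
    congr 1
    field_simp
  constructor
  · rw [key, ← hcexp]; ring
  · have hpne : (1 - p) / p ≠ 0 := ne_of_gt (div_pos (by linarith) hppos)
    have hiff3 : (∫ ω in sA, condVarAY μ A Y D ω ∂μ) = 0 ↔
        (∀ᵐ ω ∂μ, A ω = 1 → condVarAY μ A Y D ω = 0) := by
      constructor
      · intro h
        have h' := (integral_eq_zero_iff_of_nonneg_ae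
          (ae_restrict_of_ae hcv_nonneg) hCVint.restrict).mp h
        have h'' : ∀ᵐ ω ∂μ.restrict sA, condVarAY μ A Y D ω = 0 := by
          filter_upwards [h'] with ω hω using hω
        exact (ae_restrict_iff' hsA).mp h''
      · intro h
        refine (integral_eq_zero_iff_of_nonneg_ae
          (ae_restrict_of_ae hcv_nonneg) hCVint.restrict).mpr ?_
        have h' : ∀ᵐ ω ∂μ.restrict sA, condVarAY μ A Y D ω = 0 :=
          (ae_restrict_iff' hsA).mpr h
        filter_upwards [h'] with ω hω using hω
    rw [← sub_eq_zero, key, mul_eq_zero]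
    constructor
    · intro h
      exact Or.inr (hiff3.mp (h.resolve_left hpne))
    · intro h
      rcases h with h | h
      · exact Or.inr (setIntegral_measure_zero _ h)
      · exact Or.inr (hiff3.mpr h)
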